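/- (Cauchy–Schwarz's inequality) Let f, g : ℝ → ℝ, α > 0, β > 0, and a, b ∈ ℝ with a < b, b ∈ A := {a + kα : k ∈ ℕ₀} and a ∈ B := {b − kβ : k ∈ ℕ₀}. If |f| and |g| are α,β-symmetric integrable on [a,b], then |f·g|, |f|² and |g|² are α,β-symmetric integrable on [a,b] and ∫_a^b |f(t)·g(t)| d_{α,β}t ≤ √((∫_a^b |f(t)|² d_{α,β}t) · (∫_a^b |g(t)|² d_{α,β}t)). -/

import Mathlib

/-- The α-forward integral (Nörlund sum) of `f` from `a` to `b`:
`∫_a^b f(t) Δ_α t = α·∑_{k=0}^∞ f(a+kα) − α·∑_{k=0}^∞ f(b+kα)`. -/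
noncomputable def deltaInt (α : ℝ) (f : ℝ → ℝ) (a b : ℝ) : ℝ :=
  α * ∑' k : ℕ, f (a + k * α) - α * ∑' k : ℕ, f (b + k * α)

/-- `f` is α-forward integrable on `[a,b]`: both defining series converge. -/
def ForwardIntegrable (α : ℝ) (f : ℝ → ℝ) (a b : ℝ) : Prop :=
  Summable (fun k : ℕ => f (a + k * α)) ∧ Summable (fun k : ℕ => f (b + k * α))

/-- The β-backward integral of `f` from `a` to `b`:
`∫_a^b f(t) ∇_β t = β·∑_{k=0}^∞ f(b−kβ) − β·∑_{k=0}^∞ f(a−kβ)`. -/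
noncomputable def nablaInt (β : ℝ) (f : ℝ → ℝ) (a b : ℝ) : ℝ :=
  β * ∑' k : ℕ, f (b - k * β) - β * ∑' k : ℕ, f (a - k * β)

/-- `f` is β-backward integrable on `[a,b]`: both defining series converge. -/
def BackwardIntegrable (β : ℝ) (f : ℝ → ℝ) (a b : ℝ) : Prop :=
  Summable (fun k : ℕ => f (a - k * β)) ∧ Summable (fun k : ℕ => f (b - k * β))

/-- `f` is α,β-symmetric integrable on `[a,b]`. -/
def SymIntegrable (α β : ℝ) (f : ℝ → ℝ) (a b : ℝ) : Prop :=
  ForwardIntegrable α f a b ∧ BackwardIntegrable β f a b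

/-- The α,β-symmetric integral of `f` from `a` to `b`. -/
noncomputable def symInt (α β : ℝ) (f : ℝ → ℝ) (a b : ℝ) : ℝ :=
  (α / (α + β)) * deltaInt α f a b + (β / (α + β)) * nablaInt β f a b

private lemma aux_summable_mul {u v : ℕ → ℝ} (hu : Summable u) (hv : Summable v)
    (h0u : ∀ k, 0 ≤ u k) (h0v : ∀ k, 0 ≤ v k) : Summable fun k => u k * v k := by
  refine Summable.of_nonneg_of_le (fun k => mul_nonneg (h0u k) (h0v k))
    (fun k => ?_) (hv.mul_left (∑' k, u k))
  exact mul_le_mul_of_nonneg_right (Summable.le_tsum hu k fun j _ => h0u j) (h0v k)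

private lemma aux_sym_mul {α β : ℝ} {φ ψ : ℝ → ℝ} {a b : ℝ}
    (hφ : SymIntegrable α β (fun t => |φ t|) a b)
    (hψ : SymIntegrable α β (fun t => |ψ t|) a b) :
    SymIntegrable α β (fun t => |φ t| * |ψ t|) a b := by
  obtain ⟨⟨h1, h2⟩, ⟨h3, h4⟩⟩ := hφ
  obtain ⟨⟨g1, g2⟩, ⟨g3, g4⟩⟩ := hψ
  exact ⟨⟨aux_summable_mul h1 g1 (fun _ => abs_nonneg _) (fun _ => abs_nonneg _),
         aux_summable_mul h2 g2 (fun _ => abs_nonneg _) (fun _ => abs_nonneg _)⟩,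
        ⟨aux_summable_mul h3 g3 (fun _ => abs_nonneg _) (fun _ => abs_nonneg _),
         aux_summable_mul h4 g4 (fun _ => abs_nonneg _) (fun _ => abs_nonneg _)⟩⟩

set_option maxHeartbeats 1000000 in
theorem sym_cauchy_schwarz_inequality (f g : ℝ → ℝ) (α β : ℝ) (hα : 0 < α) (hβ : 0 < β)
    (a b : ℝ) (hab : a < b) (hbA : ∃ k : ℕ, b = a + k * α) (haB : ∃ k : ℕ, a = b - k * β)
    (hf : SymIntegrable α β (fun t => |f t|) a b)
    (hg : SymIntegrable α β (fun t => |g t|) a b) :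
    SymIntegrable α β (fun t => |f t * g t|) a b ∧
    SymIntegrable α β (fun t => |f t| ^ 2) a b ∧
    SymIntegrable α β (fun t => |g t| ^ 2) a b ∧
    symInt α β (fun t => |f t * g t|) a b ≤
      Real.sqrt ((symInt α β (fun t => |f t| ^ 2) a b) *
        (symInt α β (fun t => |g t| ^ 2) a b)) := by
  obtain ⟨n, hn⟩ := hbA
  obtain ⟨m, hm⟩ := haB
  have efg : (fun t => |f t * g t|) = fun t => |f t| * |g t| := by
    funext t; exact abs_mul _ _
  have ef2 : (fun t => |f t| ^ 2) = fun t => |f t| * |f t| := by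
    funext t; ring
  have eg2 : (fun t => |g t| ^ 2) = fun t => |g t| * |g t| := by
    funext t; ring
  have Sfg : SymIntegrable α β (fun t => |f t * g t|) a b := by
    rw [efg]; exact aux_sym_mul hf hg
  have Sf2 : SymIntegrable α β (fun t => |f t| ^ 2) a b := by
    rw [ef2]; exact aux_sym_mul hf hf
  have Sg2 : SymIntegrable α β (fun t => |g t| ^ 2) a b := by
    rw [eg2]; exact aux_sym_mul hg hg
  refine ⟨Sfg, Sf2, Sg2, ?_⟩
  -- reduce the integrals to finite sums
  have hdelta : ∀ φ : ℝ → ℝ, Summable (fun k : ℕ => φ (a + k * α)) →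
      deltaInt α φ a b = α * ∑ k ∈ Finset.range n, φ (a + k * α) := by
    intro φ hs
    have he : (fun k : ℕ => φ (b + k * α)) = fun k : ℕ => φ (a + (↑(k + n) : ℝ) * α) := by
      funext k; refine congrArg φ ?_; rw [hn]; push_cast; ring
    simp only [deltaInt, he]
    rw [← Summable.sum_add_tsum_nat_add n hs]
    push_cast
    ring
  have hnabla : ∀ φ : ℝ → ℝ, Summable (fun k : ℕ => φ (b - k * β)) →
      nablaInt β φ a b = β * ∑ k ∈ Finset.range m, φ (b - k * β) := by
    intro φ hs
    have he : (fun k : ℕ => φ (a - k * β)) = fun k : ℕ => φ (b - (↑(k + m) : ℝ) * β) := by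
      funext k; refine congrArg φ ?_; rw [hm]; push_cast; ring
    simp only [nablaInt, he]
    rw [← Summable.sum_add_tsum_nat_add m hs]
    push_cast
    ring
  set s : Finset (ℕ ⊕ ℕ) := (Finset.range n).disjSum (Finset.range m) with hs_def
  set w : ℕ ⊕ ℕ → ℝ := Sum.elim (fun _ => α ^ 2 / (α + β)) (fun _ => β ^ 2 / (α + β)) with hw_def
  set pt : ℕ ⊕ ℕ → ℝ := Sum.elim (fun k => a + k * α) (fun k => b - k * β) with hpt_def
  have hw0 : ∀ i, 0 ≤ w i := by
    rintro (i | i) <;> simp [hw_def] <;> positivity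
  have hsym : ∀ φ : ℝ → ℝ, Summable (fun k : ℕ => φ (a + k * α)) →
      Summable (fun k : ℕ => φ (b - k * β)) →
      symInt α β φ a b = ∑ i ∈ s, w i * φ (pt i) := by
    intro φ h1 h2
    rw [symInt, hdelta φ h1, hnabla φ h2, hs_def, Finset.sum_disjSum]
    simp only [hw_def, hpt_def, Sum.elim_inl, Sum.elim_inr]
    rw [← Finset.mul_sum, ← Finset.mul_sum]
    ring
  rw [hsym (fun t => |f t * g t|) Sfg.1.1 Sfg.2.2]
  rw [hsym (fun t => |f t| ^ 2) Sf2.1.1 Sf2.2.2]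
  rw [hsym (fun t => |g t| ^ 2) Sg2.1.1 Sg2.2.2]
  set F : ℕ ⊕ ℕ → ℝ := fun i => Real.sqrt (w i) * |f (pt i)| with hF_def
  set G : ℕ ⊕ ℕ → ℝ := fun i => Real.sqrt (w i) * |g (pt i)| with hG_def
  have hFG : ∀ i, F i * G i = w i * |f (pt i) * g (pt i)| := by
    intro i
    rw [hF_def, hG_def]
    simp only [abs_mul]
    rw [show Real.sqrt (w i) * |f (pt i)| * (Real.sqrt (w i) * |g (pt i)|)
        = Real.sqrt (w i) * Real.sqrt (w i) * (|f (pt i)| * |g (pt i)|) by ring,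
      Real.mul_self_sqrt (hw0 i)]
  have hF2 : ∀ i, F i ^ 2 = w i * |f (pt i)| ^ 2 := by
    intro i; rw [hF_def]; rw [mul_pow, Real.sq_sqrt (hw0 i)]
  have hG2 : ∀ i, G i ^ 2 = w i * |g (pt i)| ^ 2 := by
    intro i; rw [hG_def]; rw [mul_pow, Real.sq_sqrt (hw0 i)]
  calc ∑ i ∈ s, w i * |f (pt i) * g (pt i)|
      = ∑ i ∈ s, F i * G i := by
        exact (Finset.sum_congr rfl fun i _ => (hFG i).symm)
    _ ≤ Real.sqrt (∑ i ∈ s, F i ^ 2) * Real.sqrt (∑ i ∈ s, G i ^ 2) :=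
        Real.sum_mul_le_sqrt_mul_sqrt s F G
    _ = Real.sqrt ((∑ i ∈ s, F i ^ 2) * ∑ i ∈ s, G i ^ 2) :=
        (Real.sqrt_mul (Finset.sum_nonneg fun i _ => sq_nonneg _) _).symm
    _ = Real.sqrt ((∑ i ∈ s, w i * |f (pt i)| ^ 2) * ∑ i ∈ s, w i * |g (pt i)| ^ 2) := by
        rw [Finset.sum_congr rfl fun i _ => hF2 i, Finset.sum_congr rfl fun i _ => hG2 i]
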